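/- The Laplace distribution is a scale mixture of normals with exponential mixing: for λ > 0 and all b ∈ ℝ, (λ/2) e^{−λ|b|} = ∫₀^∞ (2πτ)^{−1/2} e^{−b²/(2τ)} · (λ²/2) e^{−λ²τ/2} dτ. -/

import Mathlib

open MeasureTheory Real

-- integrability of the basic Glasser integrand
private lemma glasser_integrable {a c : ℝ} (ha : 0 < a) (hc : 0 ≤ c) :
    IntegrableOn (fun t : ℝ => Real.exp (-(a * t - c / t) ^ 2)) (Set.Ioi 0) := by
  have hdom : IntegrableOn (fun t : ℝ => Real.exp (2 * a * c) * Real.exp (-(a ^ 2) * t ^ 2))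
      (Set.Ioi 0) := by
    have := (integrableOn_Ioi_exp_neg_mul_sq_iff (b := a ^ 2)).2 (by positivity)
    exact this.const_mul _
  refine Integrable.mono hdom ?_ ?_
  · refine (Measurable.aestronglyMeasurable ?_).restrict
    exact (((measurable_const.mul measurable_id).sub
      (measurable_const.div measurable_id)).pow measurable_const).neg.exp
  · filter_upwards [ae_restrict_mem measurableSet_Ioi] with t ht
    have ht0 : (0:ℝ) < t := ht
    rw [Real.norm_eq_abs, Real.norm_eq_abs, abs_of_pos (Real.exp_pos _),
      abs_of_pos (by positivity), ← Real.exp_add]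
    apply Real.exp_le_exp.2
    have hsq : (a * t - c / t) ^ 2 = a ^ 2 * t ^ 2 - 2 * a * c + (c / t) ^ 2 := by
      field_simp; ring
    nlinarith [sq_nonneg (c / t)]

private lemma glasser {a c : ℝ} (ha : 0 < a) (hc : 0 ≤ c) :
    ∫ u in Set.Ioi (0:ℝ), Real.exp (-(a * u - c / u) ^ 2) = Real.sqrt π / (2 * a) := by
  rcases eq_or_lt_of_le hc with hc0 | hc0
  · -- c = 0 : half-Gaussian
    have : ∀ u ∈ Set.Ioi (0:ℝ), Real.exp (-(a * u - c / u) ^ 2)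
        = Real.exp (-(a ^ 2) * u ^ 2) := by
      intro u hu
      rw [← hc0]
      ring_nf
    rw [setIntegral_congr_fun measurableSet_Ioi this, integral_gaussian_Ioi,
      Real.sqrt_div (by positivity : (0:ℝ) ≤ π), Real.sqrt_sq ha.le]
    ring
  · -- c > 0
    set φ : ℝ → ℝ := fun t => t - c / (a * t) with hφdef
    set ψ : ℝ → ℝ := fun t => c / (a * t) with hψdef
    have hinvd : ∀ t : ℝ, 0 < t → HasDerivAt (fun t : ℝ => c / (a * t)) (-(c / (a * t ^ 2))) t := by
      intro t ht
      have h2 : HasDerivAt (fun t : ℝ => t⁻¹) (-(t ^ 2)⁻¹) t := hasDerivAt_inv ht.ne'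
      have h3 := h2.const_mul (c / a)
      have h4 : (fun t : ℝ => c / (a * t)) = fun t : ℝ => c / a * t⁻¹ := by
        funext x; rw [← div_div, div_eq_mul_inv]
      have h5 : -(c / (a * t ^ 2)) = c / a * -(t ^ 2)⁻¹ := by field_simp
      rw [h4, h5]; exact h3
    have hφd : ∀ t ∈ Set.Ioi (0:ℝ), HasDerivWithinAt φ (1 + c / (a * t ^ 2)) (Set.Ioi 0) t := by
      intro t ht
      have ht0 : (0:ℝ) < t := ht
      have := (hasDerivAt_id t).sub (hinvd t ht0)
      have h4 : (1:ℝ) - -(c / (a * t ^ 2)) = 1 + c / (a * t ^ 2) := by ring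
      rw [h4] at this
      exact this.hasDerivWithinAt
    have hφmono : StrictMonoOn φ (Set.Ioi 0) := by
      intro s hs t ht hst
      have hs0 : (0:ℝ) < s := hs
      have ht0 : (0:ℝ) < t := ht
      have hle : c / (a * t) ≤ c / (a * s) := by
        apply div_le_div_of_nonneg_left hc (by positivity)
        nlinarith
      show s - c / (a * s) < t - c / (a * t)
      linarith
    have hφim : φ '' Set.Ioi 0 = Set.univ := by
      apply Set.eq_univ_of_forall
      intro v
      set s := Real.sqrt (v ^ 2 + 4 * c / a) with hsdef
      have hs2 : s ^ 2 = v ^ 2 + 4 * c / a := Real.sq_sqrt (by positivity)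
      have hsgt : |v| < s := by
        rw [hsdef, ← Real.sqrt_sq_eq_abs]
        apply Real.sqrt_lt_sqrt (sq_nonneg v)
        have : 0 < 4 * c / a := by positivity
        linarith
      have htpos : (0:ℝ) < (v + s) / 2 := by
        have := neg_abs_le v; linarith
      refine ⟨(v + s) / 2, htpos, ?_⟩
      show (v + s) / 2 - c / (a * ((v + s) / 2)) = v
      have hvs : 0 < v + s := by linarith
      have hs2' : a * s ^ 2 = a * v ^ 2 + 4 * c := by
        rw [hs2]; field_simp
      field_simp [hvs.ne', ha.ne']
      nlinarith [hs2']
    have hψinv : ∀ t : ℝ, 0 < t → ψ (ψ t) = t := by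
      intro t ht
      show c / (a * (c / (a * t))) = t
      field_simp
    have hψpos : ∀ t : ℝ, 0 < t → 0 < ψ t := by
      intro t ht; show 0 < c / (a * t); positivity
    have hψim : ψ '' Set.Ioi 0 = Set.Ioi 0 := by
      ext x
      constructor
      · rintro ⟨t, ht, rfl⟩; exact hψpos t ht
      · intro hx; exact ⟨ψ x, hψpos x hx, hψinv x hx⟩
    have hψinj : Set.InjOn ψ (Set.Ioi 0) := by
      intro s hs t ht h
      have h5 := hψinv s hs
      rw [h, hψinv t ht] at h5
      exact h5.symm
    have hψd : ∀ t ∈ Set.Ioi (0:ℝ), HasDerivWithinAt ψ (-(c / (a * t ^ 2))) (Set.Ioi 0) t :=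
      fun t ht => (hinvd t ht).hasDerivWithinAt
    have hIf : IntegrableOn (fun t : ℝ => Real.exp (-(a * t - c / t) ^ 2)) (Set.Ioi 0) :=
      glasser_integrable ha hc
    have hcomp : ∀ t ∈ Set.Ioi (0:ℝ),
        |(-(c / (a * t ^ 2)))| • Real.exp (-(a * ψ t - c / ψ t) ^ 2)
          = c / (a * t ^ 2) * Real.exp (-(a * t - c / t) ^ 2) := by
      intro t ht
      have ht0 : (0:ℝ) < t := ht
      have e1 : a * ψ t = c / t := by
        show a * (c / (a * t)) = c / t
        field_simp
      have e2 : c / ψ t = a * t := by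
        show c / (c / (a * t)) = a * t
        rw [div_div_eq_mul_div, mul_comm, mul_div_assoc, div_self hc0.ne', mul_one]
      rw [smul_eq_mul, abs_neg, abs_of_pos (by positivity), e1, e2,
        show (c / t - a * t) = -(a * t - c / t) by ring, neg_sq]
    have hIg : IntegrableOn (fun t : ℝ => c / (a * t ^ 2) * Real.exp (-(a * t - c / t) ^ 2))
        (Set.Ioi 0) := by
      have h6 := (integrableOn_image_iff_integrableOn_abs_deriv_smul measurableSet_Ioi hψd hψinj
        (fun u : ℝ => Real.exp (-(a * u - c / u) ^ 2))).1 (by rw [hψim]; exact hIf)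
      exact h6.congr_fun hcomp measurableSet_Ioi
    have hgf : ∫ t in Set.Ioi (0:ℝ), c / (a * t ^ 2) * Real.exp (-(a * t - c / t) ^ 2)
        = ∫ t in Set.Ioi (0:ℝ), Real.exp (-(a * t - c / t) ^ 2) := by
      conv_rhs => rw [← hψim]
      rw [integral_image_eq_integral_abs_deriv_smul measurableSet_Ioi hψd hψinj]
      exact (setIntegral_congr_fun measurableSet_Ioi hcomp).symm
    have hgauss : ∫ v : ℝ, Real.exp (-(a ^ 2) * v ^ 2) = Real.sqrt π / a := by
      rw [integral_gaussian, Real.sqrt_div (by positivity : (0:ℝ) ≤ π), Real.sqrt_sq ha.le]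
    have hmain : Real.sqrt π / a
        = (∫ t in Set.Ioi (0:ℝ), Real.exp (-(a * t - c / t) ^ 2))
          + ∫ t in Set.Ioi (0:ℝ), c / (a * t ^ 2) * Real.exp (-(a * t - c / t) ^ 2) := by
      rw [← hgauss]
      calc ∫ v : ℝ, Real.exp (-(a ^ 2) * v ^ 2)
          = ∫ v in φ '' Set.Ioi 0, Real.exp (-(a ^ 2) * v ^ 2) := by
            rw [hφim, setIntegral_univ]
        _ = ∫ t in Set.Ioi (0:ℝ), |1 + c / (a * t ^ 2)| • Real.exp (-(a ^ 2) * (φ t) ^ 2) :=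
            integral_image_eq_integral_abs_deriv_smul measurableSet_Ioi hφd hφmono.injOn _
        _ = ∫ t in Set.Ioi (0:ℝ), (Real.exp (-(a * t - c / t) ^ 2)
              + c / (a * t ^ 2) * Real.exp (-(a * t - c / t) ^ 2)) := by
            apply setIntegral_congr_fun measurableSet_Ioi
            intro t ht
            have ht0 : (0:ℝ) < t := ht
            have hexp : -(a ^ 2) * (φ t) ^ 2 = -(a * t - c / t) ^ 2 := by
              show -(a ^ 2) * (t - c / (a * t)) ^ 2 = -(a * t - c / t) ^ 2
              field_simp
            simp only [smul_eq_mul]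
            rw [abs_of_pos (by positivity), hexp]
            ring
        _ = _ := integral_add hIf hIg
    rw [hgf] at hmain
    rw [eq_div_iff (by positivity : (2:ℝ) * a ≠ 0)]
    rw [div_eq_iff ha.ne'] at hmain
    linarith

private lemma sq_image_Ioi : (fun u : ℝ => u ^ 2) '' Set.Ioi 0 = Set.Ioi 0 := by
  ext x
  constructor
  · rintro ⟨u, hu, rfl⟩
    exact pow_pos (Set.mem_Ioi.mp hu) 2
  · intro hx
    exact ⟨Real.sqrt x, Real.sqrt_pos.2 hx, Real.sq_sqrt hx.le⟩

/-- Andrews–Mallows representation: the Laplace density is a scale mixture of normals with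
exponential mixing: `(λ/2) e^{−λ|b|} = ∫₀^∞ (2πτ)^{−1/2} e^{−b²/(2τ)} (λ²/2) e^{−λ²τ/2} dτ`. -/
theorem laplace_scale_mixture_of_normals {lam : ℝ} (hlam : 0 < lam) (b : ℝ) :
    lam / 2 * Real.exp (-lam * |b|)
      = ∫ τ in Set.Ioi (0:ℝ),
          (2 * π * τ) ^ (-(1:ℝ)/2) * Real.exp (-b ^ 2 / (2 * τ))
            * (lam ^ 2 / 2) * Real.exp (-lam ^ 2 * τ / 2) := by
  have h2 : (0:ℝ) < Real.sqrt 2 := Real.sqrt_pos.2 (by norm_num)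
  have hπs : (0:ℝ) < Real.sqrt π := Real.sqrt_pos.2 Real.pi_pos
  set α := lam / Real.sqrt 2 with hαdef
  set β := |b| / Real.sqrt 2 with hβdef
  have hα : 0 < α := by positivity
  have hβ : 0 ≤ β := by positivity
  have hderiv : ∀ u ∈ Set.Ioi (0:ℝ),
      HasDerivWithinAt (fun u : ℝ => u ^ 2) (2 * u) (Set.Ioi 0) u := by
    intro u hu
    simpa using (hasDerivAt_pow 2 u).hasDerivWithinAt
  have hinj : Set.InjOn (fun u : ℝ => u ^ 2) (Set.Ioi 0) := by
    intro s hs t ht h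
    have hs0 : (0:ℝ) < s := hs
    have ht0 : (0:ℝ) < t := ht
    have h' : Real.sqrt (s ^ 2) = Real.sqrt (t ^ 2) := by
      simp only at h; rw [h]
    rwa [Real.sqrt_sq hs0.le, Real.sqrt_sq ht0.le] at h'
  have hpt : ∀ u ∈ Set.Ioi (0:ℝ),
      |2 * u| • ((2 * π * u ^ 2) ^ (-(1:ℝ)/2) * Real.exp (-b ^ 2 / (2 * u ^ 2))
        * (lam ^ 2 / 2) * Real.exp (-lam ^ 2 * u ^ 2 / 2))
      = lam ^ 2 / Real.sqrt (2 * π) * Real.exp (-lam * |b|)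
          * Real.exp (-(α * u - β / u) ^ 2) := by
    intro u hu
    have hu0 : (0:ℝ) < u := hu
    have hrpow : (2 * π * u ^ 2 : ℝ) ^ (-(1:ℝ)/2) = (Real.sqrt (2 * π) * u)⁻¹ := by
      rw [show (-(1:ℝ)/2) = -(1/2 : ℝ) by norm_num,
        Real.rpow_neg (by positivity), ← Real.sqrt_eq_rpow,
        Real.sqrt_mul (by positivity) (u ^ 2), Real.sqrt_sq hu0.le]
    have hα2 : α ^ 2 = lam ^ 2 / 2 := by
      rw [hαdef, div_pow, Real.sq_sqrt (by norm_num : (0:ℝ) ≤ 2)]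
    have hβ2 : β ^ 2 = b ^ 2 / 2 := by
      rw [hβdef, div_pow, Real.sq_sqrt (by norm_num : (0:ℝ) ≤ 2), sq_abs]
    have hαβ : α * β = lam * |b| / 2 := by
      rw [hαdef, hβdef, div_mul_div_comm, Real.mul_self_sqrt (by norm_num : (0:ℝ) ≤ 2)]
    have hexpand : (α * u - β / u) ^ 2 = α ^ 2 * u ^ 2 - 2 * (α * β) + β ^ 2 / u ^ 2 := by
      field_simp
      ring
    have hexp : -b ^ 2 / (2 * u ^ 2) + -lam ^ 2 * u ^ 2 / 2
        = -lam * |b| + -(α * u - β / u) ^ 2 := by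
      rw [hexpand, hα2, hβ2, hαβ]
      field_simp
      ring
    have h1 : Real.exp (-b ^ 2 / (2 * u ^ 2)) * Real.exp (-lam ^ 2 * u ^ 2 / 2)
        = Real.exp (-lam * |b|) * Real.exp (-(α * u - β / u) ^ 2) := by
      rw [← Real.exp_add, ← Real.exp_add, hexp]
    rw [smul_eq_mul, abs_of_pos (by positivity : (0:ℝ) < 2 * u), hrpow, mul_inv]
    rw [show (2:ℝ) * u * ((Real.sqrt (2 * π))⁻¹ * u⁻¹ * Real.exp (-b ^ 2 / (2 * u ^ 2))
          * (lam ^ 2 / 2) * Real.exp (-lam ^ 2 * u ^ 2 / 2))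
        = (u * u⁻¹) * ((Real.sqrt (2 * π))⁻¹ * lam ^ 2)
          * (Real.exp (-b ^ 2 / (2 * u ^ 2)) * Real.exp (-lam ^ 2 * u ^ 2 / 2)) by ring,
      mul_inv_cancel₀ hu0.ne', h1, div_eq_mul_inv]
    ring
  conv_rhs => rw [← sq_image_Ioi,
    integral_image_eq_integral_abs_deriv_smul measurableSet_Ioi hderiv hinj,
    setIntegral_congr_fun measurableSet_Ioi hpt]
  rw [MeasureTheory.integral_const_mul, glasser hα hβ,
    Real.sqrt_mul (by norm_num : (0:ℝ) ≤ 2) π, hαdef]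
  field_simp
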